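/- arXiv:1402.4798 — 2 statements merged into one kernel-verified Lean document; each statement's English description precedes it below -/
import Mathlib

section
/- Let s and n be real numbers with 2 < s < n. Then there exists λ > 0 such that for every k ∈ ℕ one has 0 < U_k(s) and U_k(s)/U_k(n) ≤ e^{−λk}. -/
/-- The dilated Chebyshev polynomials of the second kind:
`U 0 = 1`, `U 1 = X`, `U (k+2) = X * U (k+1) - U k`. -/
noncomputable def dilChebU : ℕ → Polynomial ℝ
  | 0 => 1
  | 1 => Polynomial.X
  | (k + 2) => Polynomial.X * dilChebU (k + 1) - dilChebU k

private lemma dilChebU_eval_rec (k : ℕ) (x : ℝ) :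
    (dilChebU (k + 2)).eval x = x * (dilChebU (k + 1)).eval x - (dilChebU k).eval x := by
  simp [dilChebU]

private lemma dilChebU_key (s n : ℝ) (hs : 2 < s) (hsn : s < n) : ∀ k : ℕ,
    0 < (dilChebU k).eval s ∧ (dilChebU k).eval s ≤ (dilChebU (k + 1)).eval s ∧
    0 < (dilChebU k).eval n ∧ (dilChebU k).eval n ≤ (dilChebU (k + 1)).eval n ∧
    n * (dilChebU (k + 1)).eval s * (dilChebU k).eval n ≤
      s * (dilChebU (k + 1)).eval n * (dilChebU k).eval s := by
  intro k
  induction k with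
  | zero =>
    simp only [dilChebU, Polynomial.eval_one, Polynomial.eval_X]
    refine ⟨by norm_num, by linarith, by norm_num, by linarith, by nlinarith⟩
  | succ m ih =>
    obtain ⟨ha0, ha01, hb0, hb01, hcross⟩ := ih
    have ha1 : 0 < (dilChebU (m + 1)).eval s := lt_of_lt_of_le ha0 ha01
    have hb1 : 0 < (dilChebU (m + 1)).eval n := lt_of_lt_of_le hb0 hb01
    have ha12 : (dilChebU (m + 1)).eval s ≤ (dilChebU (m + 2)).eval s := by
      rw [dilChebU_eval_rec]; nlinarith
    have hb12 : (dilChebU (m + 1)).eval n ≤ (dilChebU (m + 2)).eval n := by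
      rw [dilChebU_eval_rec]; nlinarith
    refine ⟨ha1, ha12, hb1, hb12, ?_⟩
    rw [dilChebU_eval_rec, dilChebU_eval_rec]
    nlinarith [mul_nonneg ha0.le hb1.le, mul_nonneg ha1.le hb0.le,
      mul_le_mul_of_nonneg_left hcross (by linarith : (0:ℝ) ≤ s)]

theorem dilChebU_ratio_exp_decay (s n : ℝ) (hs : 2 < s) (hsn : s < n) :
    ∃ lam : ℝ, 0 < lam ∧
      ∀ k : ℕ, 0 < (dilChebU k).eval s ∧
        (dilChebU k).eval s / (dilChebU k).eval n ≤ Real.exp (-(lam * k)) := by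
  have hn0 : (0:ℝ) < n := by linarith
  have hs0 : (0:ℝ) < s := by linarith
  refine ⟨Real.log (n / s), Real.log_pos (by rw [lt_div_iff₀ hs0]; linarith), ?_⟩
  have hratio : ∀ k : ℕ,
      (dilChebU k).eval s / (dilChebU k).eval n ≤ (s / n) ^ k := by
    intro k
    induction k with
    | zero => simp [dilChebU]
    | succ m ih =>
      obtain ⟨ha0, ha01, hb0, hb01, hcross⟩ := dilChebU_key s n hs hsn m
      have hb1 : 0 < (dilChebU (m + 1)).eval n := lt_of_lt_of_le hb0 hb01
      have step : (dilChebU (m + 1)).eval s / (dilChebU (m + 1)).eval n ≤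
          (s / n) * ((dilChebU m).eval s / (dilChebU m).eval n) := by
        rw [div_le_iff₀ hb1]
        have heq : s / n * ((dilChebU m).eval s / (dilChebU m).eval n) *
            (dilChebU (m + 1)).eval n =
            s * (dilChebU m).eval s * (dilChebU (m + 1)).eval n / (n * (dilChebU m).eval n) := by
          ring
        rw [heq, le_div_iff₀ (by positivity)]
        nlinarith
      calc (dilChebU (m + 1)).eval s / (dilChebU (m + 1)).eval n
          ≤ (s / n) * ((dilChebU m).eval s / (dilChebU m).eval n) := step
        _ ≤ (s / n) * (s / n) ^ m := by
            have := div_pos hs0 hn0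
            exact mul_le_mul_of_nonneg_left ih this.le
        _ = (s / n) ^ (m + 1) := (pow_succ' _ _).symm
  intro k
  refine ⟨(dilChebU_key s n hs hsn k).1, ?_⟩
  have hlog : Real.log (s / n) = -Real.log (n / s) := by
    rw [← Real.log_inv, inv_div]
  have hexp : Real.exp (-(Real.log (n / s) * k)) = (s / n) ^ k := by
    rw [show -(Real.log (n / s) * (k:ℝ)) = (k:ℝ) * Real.log (s / n) by rw [hlog]; ring,
      Real.exp_nat_mul, Real.exp_log (div_pos hs0 hn0)]
  rw [hexp]
  exact hratio k
end

section
/- Let n be a real number with n > 2 and let q = (n − √(n²−4))/2, the smallest root of X² − nX + 1 (so 0 < q < 1). Then, denoting by U_r′ the derivative of the polynomial U_r, the sequence r ↦ U_r′(n)/U_r(n) − r/√(n²−4) converges as r → ∞ to 2q²/((q² − 1)·√(n²−4)). In particular, U_r′(n)/U_r(n) = r/√(n²−4) + O(1) as r → ∞, and U_r′(n)/U_r(n) → +∞. -/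
lemma dilChebU_closed (p q : ℝ) (hpq : p * q = 1) : ∀ r : ℕ,
    (dilChebU r).eval (p + q) * (p - q) = p ^ (r+1) - q ^ (r+1) ∧
    (dilChebU r).derivative.eval (p + q) * (p - q) ^ 3
      = ((r : ℝ) + 1) * (p ^ (r+1) + q ^ (r+1)) * (p - q)
        - (p + q) * (p ^ (r+1) - q ^ (r+1)) := by
  intro r
  induction r using Nat.strong_induction_on with
  | _ r ih =>
    match r with
    | 0 => constructor <;> simp [dilChebU] <;> ring
    | 1 => constructor <;> simp [dilChebU] <;> ring
    | (k+2) =>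
      obtain ⟨e1, d1⟩ := ih (k+1) (by omega)
      obtain ⟨e0, d0⟩ := ih k (by omega)
      push_cast at d1 d0 ⊢
      constructor
      · simp only [dilChebU, Polynomial.eval_sub, Polynomial.eval_mul, Polynomial.eval_X]
        linear_combination (p + q) * e1 - e0 + (p ^ (k+1) - q ^ (k+1)) * hpq
      · simp only [dilChebU, Polynomial.derivative_sub, Polynomial.derivative_mul,
          Polynomial.derivative_X, one_mul, Polynomial.eval_sub, Polynomial.eval_add,
          Polynomial.eval_mul, Polynomial.eval_X]
        linear_combination (p - q) ^ 2 * e1 + (p + q) * d1 - d0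
          + ((-2*p + ((k:ℝ)+2)*(p-q)) * p ^ (k+1) + (2*q + ((k:ℝ)+2)*(p-q)) * q ^ (k+1)) * hpq

theorem dilChebU_log_derivative_asymptotics (n : ℝ) (hn : 2 < n)
    (q : ℝ) (hq : q = (n - Real.sqrt (n ^ 2 - 4)) / 2) :
    Filter.Tendsto
        (fun r : ℕ =>
          ((dilChebU r).derivative.eval n) / ((dilChebU r).eval n)
            - (r : ℝ) / Real.sqrt (n ^ 2 - 4))
        Filter.atTop
        (nhds (2 * q ^ 2 / ((q ^ 2 - 1) * Real.sqrt (n ^ 2 - 4)))) ∧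
    (∃ C : ℝ, ∀ r : ℕ,
      |((dilChebU r).derivative.eval n) / ((dilChebU r).eval n)
          - (r : ℝ) / Real.sqrt (n ^ 2 - 4)| ≤ C) ∧
    Filter.Tendsto
      (fun r : ℕ => ((dilChebU r).derivative.eval n) / ((dilChebU r).eval n))
      Filter.atTop Filter.atTop := by
  have hn4 : (0:ℝ) < n ^ 2 - 4 := by nlinarith
  set s : ℝ := Real.sqrt (n ^ 2 - 4) with hsdef
  have hs2 : s ^ 2 = n ^ 2 - 4 := Real.sq_sqrt hn4.le
  have hs0 : 0 < s := Real.sqrt_pos.mpr hn4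
  set p : ℝ := (n + s) / 2 with hpdef
  have hsum : p + q = n := by rw [hpdef, hq]; ring
  have hdiff : p - q = s := by rw [hpdef, hq]; ring
  have hpq : p * q = 1 := by
    rw [hpdef, hq]; nlinarith [hs2]
  have hsn : s < n := by nlinarith
  have hq0 : 0 < q := by rw [hq]; linarith
  have hq1 : q < 1 := by nlinarith
  have hp1 : 1 < p := by nlinarith
  have hclosed := dilChebU_closed p q hpq
  -- basic positivity for each r
  have hba : ∀ r : ℕ, q ^ (r+1) < p ^ (r+1) := fun r =>
    pow_lt_pow_left₀ (by linarith) hq0.le (by omega)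
  have heval : ∀ r : ℕ, (dilChebU r).eval n = (p ^ (r+1) - q ^ (r+1)) / s := by
    intro r
    have := (hclosed r).1
    rw [hsum, hdiff] at this
    field_simp [hs0.ne'] at this ⊢
    linarith [this]
  have hdval : ∀ r : ℕ, (dilChebU r).derivative.eval n
      = (((r:ℝ)+1) * (p ^ (r+1) + q ^ (r+1)) * s - n * (p ^ (r+1) - q ^ (r+1))) / s ^ 3 := by
    intro r
    have := (hclosed r).2
    rw [hsum, hdiff] at this
    rw [eq_div_iff (by positivity)]
    linarith [this]
  -- the key pointwise identity
  have key : ∀ r : ℕ,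
      ((dilChebU r).derivative.eval n) / ((dilChebU r).eval n) - (r : ℝ) / s
        = (s - n) / s ^ 2
          + 2 * ((r:ℝ)+1) * (q ^ 2) ^ (r+1) / (s * (1 - (q ^ 2) ^ (r+1))) := by
    intro r
    set a : ℝ := p ^ (r+1) with ha
    set b : ℝ := q ^ (r+1) with hb
    have hab : a * b = 1 := by rw [ha, hb, ← mul_pow, hpq, one_pow]
    have hb0 : 0 < b := by positivity
    have hba' : b < a := hba r
    have hQ : (q ^ 2) ^ (r+1) = b ^ 2 := by rw [hb, ← pow_mul, ← pow_mul, Nat.mul_comm]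
    have h1b : 1 - b ^ 2 = b * (a - b) := by linear_combination -hab
    rw [heval r, hdval r, hQ, h1b]
    rw [← ha, ← hb]
    have hab0 : a - b ≠ 0 := by linarith
    field_simp
    ring_nf
  -- limits
  have hq2 : |q ^ 2| < 1 := by rw [abs_of_nonneg (by positivity)]; nlinarith
  have hnum : Filter.Tendsto (fun r : ℕ => ((r:ℝ)+1) * (q ^ 2) ^ (r+1))
      Filter.atTop (nhds 0) := by
    have hsum0 : Filter.Tendsto (fun r : ℕ => (r:ℝ) ^ 1 * (q ^ 2) ^ r)
        Filter.atTop (nhds 0) := by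
      have := (summable_pow_mul_geometric_of_norm_lt_one 1
        (r := q ^ 2) (by rwa [Real.norm_eq_abs])).tendsto_atTop_zero
      exact this
    refine (hsum0.comp (Filter.tendsto_add_atTop_nat 1)).congr fun r => ?_
    simp [Function.comp]
  have hden : Filter.Tendsto (fun r : ℕ => (q ^ 2) ^ (r+1)) Filter.atTop (nhds 0) := by
    have := (tendsto_pow_atTop_nhds_zero_of_abs_lt_one hq2).comp
      (Filter.tendsto_add_atTop_nat 1)
    simpa [Function.comp_def] using this
  have hmain : Filter.Tendsto
      (fun r : ℕ =>
        ((dilChebU r).derivative.eval n) / ((dilChebU r).eval n) - (r : ℝ) / s)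
      Filter.atTop (nhds (2 * q ^ 2 / ((q ^ 2 - 1) * s))) := by
    have hlim : Filter.Tendsto
        (fun r : ℕ => (s - n) / s ^ 2
          + 2 * ((r:ℝ)+1) * (q ^ 2) ^ (r+1) / (s * (1 - (q ^ 2) ^ (r+1))))
        Filter.atTop (nhds ((s - n) / s ^ 2 + 2 * 0 / (s * (1 - 0)))) := by
      apply Filter.Tendsto.const_add
      apply Filter.Tendsto.div
      · exact (hnum.const_mul 2).congr (by intro r; ring)
      · exact (tendsto_const_nhds.sub hden).const_mul s
      · simp [hs0.ne']
    have hval : (s - n) / s ^ 2 + 2 * 0 / (s * (1 - 0)) = 2 * q ^ 2 / ((q ^ 2 - 1) * s) := by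
      have hq21 : q ^ 2 - 1 = -(q * s) := by linear_combination (-q) * hdiff + hpq
      have hden0 : (q ^ 2 - 1) * s ≠ 0 := mul_ne_zero (by nlinarith) hs0.ne'
      have h0 : (2:ℝ) * 0 / (s * (1 - 0)) = 0 := by norm_num
      rw [h0, add_zero, div_eq_div_iff (by positivity) hden0]
      linear_combination ((s - n) * s) * hq21 + (-2 * q * s ^ 2) * hq
    rw [← hval]
    exact hlim.congr (fun r => (key r).symm)
  refine ⟨hmain, ?_, ?_⟩
  · -- bounded
    have bdd : ∀ (u : ℕ → ℝ) (R : ℝ), (∀ m k, |u m - u k| < R) → ∀ r, |u r| ≤ R + |u 0| := by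
      intro u R hu r
      have h1 := abs_sub_abs_le_abs_sub (u r) (u 0)
      have h2 := hu r 0
      linarith
    obtain ⟨R, hR0, hR⟩ := cauchySeq_bdd hmain.cauchySeq
    refine ⟨R + |((dilChebU 0).derivative.eval n) / ((dilChebU 0).eval n) - ((0:ℕ) : ℝ) / s|,
      fun r => ?_⟩
    exact bdd (fun r : ℕ =>
        ((dilChebU r).derivative.eval n) / ((dilChebU r).eval n) - (r : ℝ) / s) R
      (fun m k => by have h := hR m k; rwa [Real.dist_eq] at h) r
  · -- tendsto atTop
    have hdiv : Filter.Tendsto (fun r : ℕ => (r : ℝ) / s) Filter.atTop Filter.atTop :=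
      Filter.Tendsto.atTop_div_const hs0 tendsto_natCast_atTop_atTop
    have := hmain.add_atTop hdiv
    refine this.congr (fun r => by ring)
end
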